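/- arXiv:1606.06119 — 5 statements merged into one kernel-verified Lean document; each statement's English description precedes it below -/
import Mathlib

section
/- Let A be a real number and a_1,...,a_n a finite sequence of reals bounded above by A. Suppose there is c < A with sum_{i=1}^n a_i ≥ n·c. Then for any c' < c there exist l integers 1 ≤ t_1 < ... < t_l ≤ n such that for every k = 1,...,l and every j = 1,...,t_k one has sum_{i=j}^{t_k} a_i ≥ (t_k - j + 1)·c'. Moreover l/n ≥ (c - c')/(A - c'). -/
open Finset

noncomputable def plissM (S : ℕ → ℝ) : ℕ → ℝ
  | 0 => 0
  | m + 1 => max (plissM S m) (S (m + 1))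

lemma plissM_mono (S : ℕ → ℝ) : Monotone (plissM S) := by
  apply monotone_nat_of_le_succ
  intro m
  exact le_max_left _ _

lemma le_plissM (S : ℕ → ℝ) (hS0 : S 0 = 0) (m : ℕ) : S m ≤ plissM S m := by
  cases m with
  | zero => simp [plissM, hS0]
  | succ k => exact le_max_right _ _

/-- The Pliss lemma. -/
theorem pliss_lemma (n : ℕ) (hn : 0 < n) (a : ℕ → ℝ) (A c c' : ℝ)
    (hA : ∀ i ∈ Finset.Icc 1 n, a i ≤ A) (hcA : c < A)
    (hsum : (n : ℝ) * c ≤ ∑ i ∈ Finset.Icc 1 n, a i) (hc' : c' < c) :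
    ∃ (l : ℕ) (t : Fin l → ℕ), StrictMono t ∧
      (∀ k, 1 ≤ t k ∧ t k ≤ n) ∧
      (∀ k, ∀ j, 1 ≤ j → j ≤ t k →
        ((t k : ℝ) - j + 1) * c' ≤ ∑ i ∈ Finset.Icc j (t k), a i) ∧
      (c - c') / (A - c') ≤ (l : ℝ) / n := by
  classical
  set B := A - c' with hB
  have hBpos : (0:ℝ) < B := by simp [hB]; linarith
  set S : ℕ → ℝ := fun m => ∑ i ∈ Finset.Icc 1 m, (a i - c') with hS
  have hS0 : S 0 = 0 := by simp [hS]
  have hSsucc : ∀ m, S (m + 1) = S m + (a (m + 1) - c') := by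
    intro m
    simp only [hS]
    rw [Finset.sum_Icc_succ_top (Nat.succ_le_succ (Nat.zero_le m))]
  set P : ℕ → Prop := fun m => ∀ j < m, S j ≤ S m with hPdef
  set R : Finset ℕ := (Finset.Icc 1 n).filter P with hR
  -- difference of partial sums
  have hdiff : ∀ j m : ℕ, 1 ≤ j → j ≤ m →
      ∑ i ∈ Finset.Icc j m, (a i - c') = S m - S (j - 1) := by
    intro j m hj hjm
    have hj' : j - 1 + 1 = j := Nat.succ_pred_eq_of_pos hj
    have h1 : Finset.Icc j m = Finset.Ioc (j-1) m := by
      ext x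
      simp only [Finset.mem_Icc, Finset.mem_Ioc]
      omega
    have h2 : ∀ m : ℕ, S m = ∑ i ∈ Finset.Ioc 0 m, (a i - c') := by
      intro m; simp [hS, ← Finset.Icc_add_one_left_eq_Ioc]
    have h3 := Finset.sum_Ioc_consecutive (fun i => a i - c')
      (Nat.zero_le (j-1)) (by omega : j - 1 ≤ m)
    rw [h1, h2 m, h2 (j-1)]
    linarith [h3]
  -- record counting function
  set r : ℕ → ℕ := fun m => ((Finset.Icc 1 m).filter P).card with hr
  have hrsucc : ∀ m, r (m+1) = if P (m+1) then r m + 1 else r m := by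
    intro m
    have : Finset.Icc 1 (m+1) = insert (m+1) (Finset.Icc 1 m) := by
      ext x
      simp only [Finset.mem_Icc, Finset.mem_insert]
      omega
    rw [hr]
    simp only [this, Finset.filter_insert]
    by_cases h : P (m+1)
    · rw [if_pos h, if_pos h, Finset.card_insert_of_notMem]
      simp
    · rw [if_neg h, if_neg h]
  -- key bound: M m ≤ r m * B for m ≤ n
  have hkey : ∀ m, m ≤ n → plissM S m ≤ (r m : ℝ) * B := by
    intro m
    induction m with
    | zero => intro _; simp [plissM, hr]
    | succ k ih =>
      intro hk
      have ihk := ih (by omega)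
      by_cases hPk : P (k+1)
      · have haA : a (k+1) ≤ A := hA _ (by simp; omega)
        have hSb : S (k+1) ≤ plissM S k + B := by
          have := le_plissM S hS0 k
          rw [hSsucc k]; simp only [hB]; linarith
        have : plissM S (k+1) ≤ plissM S k + B :=
          max_le (by linarith) hSb
        rw [hrsucc k, if_pos hPk]
        push_cast
        linarith
      · have : plissM S (k+1) = plissM S k := by
          have hex : ∃ j < k + 1, S (k+1) < S j := by
            by_contra h
            push_neg at h
            exact hPk fun j hj => h j hj
          obtain ⟨j, hj, hjS⟩ := hex
          have : S (k+1) ≤ plissM S k :=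
            le_trans (le_of_lt hjS)
              (le_trans (le_plissM S hS0 j) (plissM_mono S (by omega)))
          simp [plissM, max_eq_left this]
        rw [hrsucc k, if_neg hPk, this]
        exact ihk
  -- S n is large
  have hSn : (n : ℝ) * (c - c') ≤ S n := by
    have : S n = (∑ i ∈ Finset.Icc 1 n, a i) - n * c' := by
      simp [hS, Finset.sum_sub_distrib, Nat.card_Icc]
    rw [this]; nlinarith
  have hmain : (n : ℝ) * (c - c') ≤ (R.card : ℝ) * B := by
    calc (n : ℝ) * (c - c') ≤ S n := hSn
      _ ≤ plissM S n := le_plissM S hS0 n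
      _ ≤ (r n : ℝ) * B := hkey n le_rfl
      _ = (R.card : ℝ) * B := by rw [hr, hR]
  refine ⟨R.card, R.orderEmbOfFin rfl, (R.orderEmbOfFin rfl).strictMono, ?_, ?_, ?_⟩
  · intro k
    have hmem : (R.orderEmbOfFin rfl) k ∈ R := Finset.orderEmbOfFin_mem R rfl k
    have hmem2 := Finset.mem_filter.mp hmem
    rw [Finset.mem_Icc] at hmem2
    exact ⟨hmem2.1.1, hmem2.1.2⟩
  · intro k j hj hjk
    have hmem : (R.orderEmbOfFin rfl) k ∈ R := Finset.orderEmbOfFin_mem R rfl k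
    have hmem2 := Finset.mem_filter.mp hmem
    set m := (R.orderEmbOfFin rfl) k with hm
    have hrec : S (j - 1) ≤ S m := hmem2.2 (j - 1) (by omega)
    have hd := hdiff j m hj hjk
    have hsplit : ∑ i ∈ Finset.Icc j m, (a i - c')
        = (∑ i ∈ Finset.Icc j m, a i) - (↑(m + 1 - j)) * c' := by
      simp [Finset.sum_sub_distrib, Nat.card_Icc]
    have hcast : ((m + 1 - j : ℕ) : ℝ) = (m : ℝ) - j + 1 := by
      have : j ≤ m + 1 := by omega
      push_cast [Nat.cast_sub this]
      ring
    rw [hcast] at hsplit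
    rw [hsplit] at hd
    linarith
  · rw [div_le_div_iff₀ (by linarith) (by exact_mod_cast hn)]
    calc (c - c') * n = (n : ℝ) * (c - c') := by ring
      _ ≤ (R.card : ℝ) * B := hmain
      _ = (R.card : ℝ) * (A - c') := by rw [hB]
end

section
/- Let X be a compact metric space, f : X → X continuous, φ : X → ℝ continuous, and x ∈ X. Suppose there are sequences t_i → ∞ of natural numbers and β_i → 0 of positive reals such that x is (β_i, t_i, ∞)-controlled for every i (control at any scale). Then every point y in the ω-limit set of x satisfies lim_{n→∞} (1/n) sum_{k=0}^{n-1} φ(f^k(y)) = 0, and this limit is uniform over ω(x). -/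
/-- `x` is `(β, t, ∞)`-controlled for `φ` along the orbit of `f`: there is an
unbounded set `P ⊆ ℕ` containing `0` such that any two consecutive elements
`k < l` of `P` satisfy `l - k ≤ t` and the average of `φ` along the orbit
segment from time `k` to time `l` is at most `β` in absolute value. -/
def ControlledAtScale {X : Type*} (f : X → X) (φ : X → ℝ) (x : X) (β : ℝ) (t : ℕ) : Prop :=
  ∃ P : Set ℕ, 0 ∈ P ∧ ¬ BddAbove P ∧
    ∀ k ∈ P, ∀ l ∈ P, k < l → (∀ m, k < m → m < l → m ∉ P) →
      l - k ≤ t ∧ |(∑ i ∈ Finset.range (l - k), φ (f^[i + k] x)) / ((l : ℝ) - k)| ≤ β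

/-- Control at any scale implies that Birkhoff averages of `φ` vanish,
uniformly over the ω-limit set of `x`. -/
theorem control_at_any_scale_vanishing_average {X : Type*} [MetricSpace X] [CompactSpace X]
    (f : X → X) (hf : Continuous f) (φ : X → ℝ) (hφ : Continuous φ) (x : X)
    (t : ℕ → ℕ) (β : ℕ → ℝ) (ht : Filter.Tendsto t Filter.atTop Filter.atTop)
    (hβpos : ∀ i, 0 < β i) (hβ : Filter.Tendsto β Filter.atTop (nhds 0))
    (hctrl : ∀ i, ControlledAtScale f φ x (β i) (t i)) :
    ∀ ε > 0, ∃ N : ℕ, ∀ y ∈ ⋂ N' : ℕ, closure ((fun k => f^[k] x) '' Set.Ici N'),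
      ∀ n ≥ N, |(∑ k ∈ Finset.range n, φ (f^[k] y)) / (n : ℝ)| < ε := by
  classical
  -- a uniform bound on |φ|
  obtain ⟨M, hM⟩ : ∃ M, ∀ z, |φ z| ≤ M := by
    obtain ⟨C, hC⟩ := isCompact_univ.exists_bound_of_continuousOn hφ.continuousOn
    exact ⟨C, fun z => by simpa using hC z trivial⟩
  have hM0 : 0 ≤ M := le_trans (abs_nonneg _) (hM x)
  intro ε hε
  -- pick a scale with β i < ε / 2
  obtain ⟨i, hβi⟩ : ∃ i, β i < ε / 2 := by
    have := (hβ.eventually_lt_const (by linarith : (0:ℝ) < ε / 2)).exists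
    exact this
  obtain ⟨P, hP0, hPunb, hPctl⟩ := hctrl i
  set t0 : ℕ := t i with ht0
  set β0 : ℝ := β i with hβ0
  have hβ0pos : 0 < β0 := hβpos i
  set g : ℕ → ℝ := fun j => φ (f^[j] x) with hg
  -- next control point after k
  have hnext : ∀ k ∈ P, ∃ m ∈ P, k < m ∧ m - k ≤ t0 ∧
      |∑ j ∈ Finset.Ico k m, g j| ≤ β0 * ((m : ℝ) - k) ∧ ∀ q ∈ P, k < q → m ≤ q := by
    intro k hk
    have hQne : {p | p ∈ P ∧ k < p}.Nonempty := by
      obtain ⟨p, hp, hkp⟩ := not_bddAbove_iff.1 hPunb k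
      exact ⟨p, hp, hkp⟩
    set m := sInf {p | p ∈ P ∧ k < p} with hm
    obtain ⟨hmP, hkm⟩ := Nat.sInf_mem hQne
    have hmin : ∀ q ∈ P, k < q → m ≤ q := fun q hq h => Nat.sInf_le ⟨hq, h⟩
    have hcons : ∀ q, k < q → q < m → q ∉ P := fun q h1 h2 hq =>
      absurd (hmin q hq h1) (not_le.2 h2)
    obtain ⟨hgap, havg⟩ := hPctl k hk m hmP hkm hcons
    have hd : (0:ℝ) < (m : ℝ) - k := by
      have : (k:ℝ) < m := by exact_mod_cast hkm
      linarith
    have hsum : ∑ i ∈ Finset.range (m - k), φ (f^[i + k] x) = ∑ j ∈ Finset.Ico k m, g j := by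
      rw [Finset.sum_Ico_eq_sum_range]
      exact Finset.sum_congr rfl fun j _ => by simp [hg, Nat.add_comm]
    rw [abs_div, abs_of_pos hd, div_le_iff₀ hd, hsum] at havg
    exact ⟨m, hmP, hkm, hgap, havg, hmin⟩
  -- block sums between control points
  have hblock : ∀ d k, k ∈ P → k + d ∈ P → |∑ j ∈ Finset.Ico k (k + d), g j| ≤ β0 * d := by
    intro d
    induction d using Nat.strong_induction_on with
    | _ d ih =>
      intro k hk hl
      rcases Nat.eq_zero_or_pos d with h0 | hpos
      · subst h0; simp
      · obtain ⟨m, hmP, hkm, hgap, hsum, hmin⟩ := hnext k hk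
        have hml : m ≤ k + d := hmin _ hl (by omega)
        have h2 := ih (k + d - m) (by omega) m hmP (by rw [show m + (k + d - m) = k + d by omega]; exact hl)
        rw [show m + (k + d - m) = k + d by omega] at h2
        have hsplit := Finset.sum_Ico_consecutive g hkm.le hml
        have hcast1 : (m : ℝ) - k ≤ (m - k : ℕ) := by
          rw [Nat.cast_sub hkm.le]
        have hcast : ((m - k : ℕ) : ℝ) + ((k + d - m : ℕ) : ℝ) = d := by
          rw [Nat.cast_sub hkm.le, Nat.cast_sub hml]
          push_cast
          ring
        calc |∑ j ∈ Finset.Ico k (k + d), g j|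
            ≤ |∑ j ∈ Finset.Ico k m, g j| + |∑ j ∈ Finset.Ico m (k + d), g j| := by
              rw [← hsplit]; exact abs_add_le _ _
          _ ≤ β0 * ((m : ℝ) - k) + β0 * (k + d - m : ℕ) := add_le_add hsum h2
          _ ≤ β0 * d := by
              rw [← hcast]
              have : (m : ℝ) - k = ((m - k : ℕ) : ℝ) := by rw [Nat.cast_sub hkm.le]
              rw [this, ← mul_add]
  -- in every window of length t0 there is a control point
  have hfind : ∀ a : ℕ, ∃ p ∈ P, a ≤ p ∧ p ≤ a + t0 := by
    intro a
    have hQne : {p | p ∈ P ∧ p ≤ a}.Nonempty := ⟨0, hP0, Nat.zero_le a⟩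
    have hQbdd : BddAbove {p | p ∈ P ∧ p ≤ a} := ⟨a, fun q hq => hq.2⟩
    set k := sSup {p | p ∈ P ∧ p ≤ a} with hk
    obtain ⟨hkP, hka⟩ := Nat.sSup_mem hQne hQbdd
    obtain ⟨m, hmP, hkm, hgap, -, hmin⟩ := hnext k hkP
    have ham : a < m := by
      by_contra h
      push_neg at h
      exact absurd (le_csSup hQbdd ⟨hmP, h⟩) (not_le.2 hkm)
    exact ⟨m, hmP, ham.le, by omega⟩
  -- trivial bound
  have habs : ∀ a b : ℕ, |∑ j ∈ Finset.Ico a b, g j| ≤ M * ((b - a : ℕ) : ℝ) := by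
    intro a b
    calc |∑ j ∈ Finset.Ico a b, g j| ≤ ∑ j ∈ Finset.Ico a b, |g j| :=
          Finset.abs_sum_le_sum_abs _ _
      _ ≤ ∑ _j ∈ Finset.Ico a b, M := Finset.sum_le_sum fun j _ => hM _
      _ = M * ((b - a : ℕ) : ℝ) := by
          rw [Finset.sum_const, Nat.card_Ico, nsmul_eq_mul, mul_comm]
  -- main estimate along the orbit
  have hmain : ∀ a n : ℕ, |∑ j ∈ Finset.Ico a (a + n), g j| ≤ β0 * n + 2 * M * t0 := by
    intro a n
    rcases le_or_gt n (2 * t0) with hsmall | hbig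
    · have h := habs a (a + n)
      have h1 : ((a + n - a : ℕ) : ℝ) = n := by rw [show a + n - a = n by omega]
      rw [h1] at h
      have hn2 : (n : ℝ) ≤ 2 * t0 := by exact_mod_cast hsmall
      have c1 : (0:ℝ) ≤ β0 * n := mul_nonneg hβ0pos.le (Nat.cast_nonneg _)
      nlinarith
    · obtain ⟨k, hkP, hak, hka⟩ := hfind a
      obtain ⟨p, hpP, hp1, hp2⟩ := hfind (a + n - t0)
      have hkp : k ≤ p := by omega
      have hpan : p ≤ a + n := by omega
      have hs1 := Finset.sum_Ico_consecutive g (show a ≤ k by omega) (show k ≤ a + n by omega)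
      have hs2 := Finset.sum_Ico_consecutive g hkp hpan
      have hb := hblock (p - k) k hkP (by rw [show k + (p - k) = p by omega]; exact hpP)
      rw [show k + (p - k) = p by omega] at hb
      have h1 := habs a k
      have h3 := habs p (a + n)
      have e1 : ((k - a : ℕ) : ℝ) ≤ t0 := by exact_mod_cast (show k - a ≤ t0 by omega)
      have e2 : ((p - k : ℕ) : ℝ) ≤ n := by exact_mod_cast (show p - k ≤ n by omega)
      have e3 : ((a + n - p : ℕ) : ℝ) ≤ t0 := by exact_mod_cast (show a + n - p ≤ t0 by omega)
      calc |∑ j ∈ Finset.Ico a (a + n), g j|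
          ≤ |∑ j ∈ Finset.Ico a k, g j| + |∑ j ∈ Finset.Ico k (a + n), g j| := by
            rw [← hs1]; exact abs_add_le _ _
        _ ≤ |∑ j ∈ Finset.Ico a k, g j| +
              (|∑ j ∈ Finset.Ico k p, g j| + |∑ j ∈ Finset.Ico p (a + n), g j|) := by
            gcongr
            rw [← hs2]; exact abs_add_le _ _
        _ ≤ M * ((k - a : ℕ) : ℝ) + (β0 * ((p - k : ℕ) : ℝ) + M * ((a + n - p : ℕ) : ℝ)) := by
            gcongr
        _ ≤ β0 * n + 2 * M * t0 := by
            have c1 : (0:ℝ) ≤ ((k - a : ℕ) : ℝ) := Nat.cast_nonneg _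
            have c2 : (0:ℝ) ≤ ((a + n - p : ℕ) : ℝ) := Nat.cast_nonneg _
            have c3 : (0:ℝ) ≤ ((p - k : ℕ) : ℝ) := Nat.cast_nonneg _
            nlinarith
  -- choose N
  obtain ⟨N0, hN0⟩ := exists_nat_gt (2 * M * t0 / (ε / 2))
  refine ⟨max N0 1, ?_⟩
  intro y hy n hn
  have hn1 : 1 ≤ n := le_trans (le_max_right _ _) hn
  have hnN0 : (N0 : ℝ) ≤ n := by exact_mod_cast le_trans (le_max_left _ _) hn
  have hnpos : (0:ℝ) < n := by exact_mod_cast hn1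
  set c : ℝ := β0 * n + 2 * M * t0 with hc
  -- transfer the bound to y by continuity
  have hcont : Continuous fun z : X => |∑ k ∈ Finset.range n, φ (f^[k] z)| := by
    apply Continuous.abs
    exact continuous_finset_sum _ fun k _ => hφ.comp (hf.iterate k)
  have hclosed : IsClosed {z : X | |∑ k ∈ Finset.range n, φ (f^[k] z)| ≤ c} :=
    isClosed_le hcont continuous_const
  have hsub : (fun k => f^[k] x) '' Set.Ici 0 ⊆
      {z : X | |∑ k ∈ Finset.range n, φ (f^[k] z)| ≤ c} := by
    rintro _ ⟨a, -, rfl⟩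
    have hrw : ∑ k ∈ Finset.range n, φ (f^[k] (f^[a] x)) = ∑ j ∈ Finset.Ico a (a + n), g j := by
      rw [Finset.sum_Ico_eq_sum_range, show a + n - a = n by omega]
      exact Finset.sum_congr rfl fun j _ => by
        simp only [hg, ← Function.iterate_add_apply, Nat.add_comm j a]
    show |∑ k ∈ Finset.range n, φ (f^[k] (f^[a] x))| ≤ c
    rw [hrw]
    exact hmain a n
  have hy0 : y ∈ closure ((fun k => f^[k] x) '' Set.Ici 0) := by
    exact Set.mem_iInter.1 hy 0
  have hyc : |∑ k ∈ Finset.range n, φ (f^[k] y)| ≤ c :=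
    closure_minimal hsub hclosed hy0
  -- final arithmetic
  rw [abs_div, abs_of_pos hnpos, div_lt_iff₀ hnpos]
  have h2 : 2 * M * t0 < ε / 2 * n := by
    have ht0' : 2 * M * t0 < N0 * (ε / 2) := by
      rwa [div_lt_iff₀ (by linarith : (0:ℝ) < ε / 2)] at hN0
    have : (N0 : ℝ) * (ε / 2) ≤ n * (ε / 2) := by
      apply mul_le_mul_of_nonneg_right hnN0 (by linarith)
    nlinarith
  have h1 : β0 * n < ε / 2 * n := by
    apply mul_lt_mul_of_pos_right hβi hnpos
  calc |∑ k ∈ Finset.range n, φ (f^[k] y)| ≤ c := hyc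
    _ < ε * n := by rw [hc]; nlinarith
end

section
/- Let (c_j)_{j∈ℕ} be a sequence of reals bounded by M > 0, and suppose for every i ∈ ℕ the sequence is (β_i, t_i)-controlled, i.e., there exists an infinite partition of ℕ into consecutive intervals of length ≤ t_i on each of which the average of c is ≤ β_i in absolute value, where β_i → 0. Then lim_{n→∞} (1/n) sum_{j=0}^{n-1} c_j = 0. -/
/-- A bounded sequence controlled at every scale, with `β_i → 0`, has vanishing
Birkhoff averages. -/
theorem controlled_at_all_scales_vanishing (c : ℕ → ℝ) (M : ℝ) (hM : 0 < M)
    (hbd : ∀ j, |c j| ≤ M) (t : ℕ → ℕ) (β : ℕ → ℝ) (hβpos : ∀ i, 0 < β i)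
    (hβ : Filter.Tendsto β Filter.atTop (nhds 0))
    (hctrl : ∀ i, ∃ P : Set ℕ, 0 ∈ P ∧ ¬ BddAbove P ∧
      ∀ k ∈ P, ∀ l ∈ P, k < l → (∀ m, k < m → m < l → m ∉ P) →
        l - k ≤ t i ∧ |(∑ j ∈ Finset.Ico k l, c j) / ((l : ℝ) - k)| ≤ β i) :
    Filter.Tendsto (fun n => (∑ j ∈ Finset.range n, c j) / (n : ℝ))
      Filter.atTop (nhds 0) := by
  classical
  have key : ∀ i n, |∑ j ∈ Finset.range n, c j| ≤ β i * n + M * t i := by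
    intro i n
    obtain ⟨P, h0, hub, hP⟩ := hctrl i
    have A : ∀ l, l ∈ P → |∑ j ∈ Finset.range l, c j| ≤ β i * l := by
      intro l
      induction l using Nat.strong_induction_on with
      | _ l ih =>
        intro hl
        rcases Nat.eq_zero_or_pos l with rfl | hlpos
        · simp
        · set S := (Finset.range l).filter (· ∈ P) with hS
          have h0S : 0 ∈ S := by simp [hS, hlpos, h0]
          set k := S.max' ⟨0, h0S⟩ with hk
          have hkS : k ∈ S := S.max'_mem _
          have hkP : k ∈ P := (Finset.mem_filter.1 hkS).2
          have hkl : k < l := Finset.mem_range.1 (Finset.mem_filter.1 hkS).1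
          have hno : ∀ m, k < m → m < l → m ∉ P := by
            intro m hkm hml hmP
            exact absurd (S.le_max' m (Finset.mem_filter.2
              ⟨Finset.mem_range.2 hml, hmP⟩)) (not_le.2 hkm)
          obtain ⟨-, havg⟩ := hP k hkP l hl hkl hno
          have hpos : (0:ℝ) < (l:ℝ) - k := by
            have : (k:ℝ) < l := Nat.cast_lt.2 hkl
            linarith
          have hIco : |∑ j ∈ Finset.Ico k l, c j| ≤ β i * ((l:ℝ) - k) := by
            rw [abs_div, abs_of_pos hpos, div_le_iff₀ hpos] at havg
            exact havg
          have hsplit : ∑ j ∈ Finset.range l, c j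
              = ∑ j ∈ Finset.range k, c j + ∑ j ∈ Finset.Ico k l, c j := by
            rw [Finset.range_eq_Ico, Finset.range_eq_Ico]
            exact (Finset.sum_Ico_consecutive c (Nat.zero_le k) hkl.le).symm
          have hIH := ih k hkl hkP
          calc |∑ j ∈ Finset.range l, c j|
              ≤ |∑ j ∈ Finset.range k, c j| + |∑ j ∈ Finset.Ico k l, c j| := by
                rw [hsplit]; exact abs_add_le _ _
            _ ≤ β i * k + β i * ((l:ℝ) - k) := add_le_add hIH hIco
            _ = β i * l := by ring
    set S := (Finset.range (n+1)).filter (· ∈ P) with hS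
    have h0S : 0 ∈ S := by simp [hS, h0]
    set k := S.max' ⟨0, h0S⟩ with hk
    have hkS : k ∈ S := S.max'_mem _
    have hkP : k ∈ P := (Finset.mem_filter.1 hkS).2
    have hkn : k ≤ n := Nat.lt_succ_iff.1 (Finset.mem_range.1 (Finset.mem_filter.1 hkS).1)
    have hex : ∃ p, p ∈ P ∧ k < p := by
      obtain ⟨p, hpP, hp⟩ := not_bddAbove_iff.1 hub n
      exact ⟨p, hpP, lt_of_le_of_lt hkn hp⟩
    set l := Nat.find hex with hl
    obtain ⟨hlP, hkl⟩ := Nat.find_spec hex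
    have hno : ∀ m, k < m → m < l → m ∉ P := fun m hkm hml hmP =>
      Nat.find_min hex hml ⟨hmP, hkm⟩
    obtain ⟨hlk, -⟩ := hP k hkP l hlP hkl hno
    have hnl : n < l := by
      by_contra h
      push_neg at h
      exact absurd (S.le_max' l (Finset.mem_filter.2
        ⟨Finset.mem_range.2 (Nat.lt_succ_of_le h), hlP⟩)) (not_le.2 hkl)
    have hnk : n - k ≤ t i := le_trans (Nat.sub_le_sub_right hnl.le k) hlk
    have hIco : |∑ j ∈ Finset.Ico k n, c j| ≤ M * ((n - k : ℕ) : ℝ) := by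
      calc |∑ j ∈ Finset.Ico k n, c j| ≤ ∑ j ∈ Finset.Ico k n, |c j| :=
            Finset.abs_sum_le_sum_abs _ _
        _ ≤ ∑ _j ∈ Finset.Ico k n, M := Finset.sum_le_sum fun j _ => hbd j
        _ = ((n - k : ℕ) : ℝ) * M := by
            rw [Finset.sum_const, Nat.card_Ico, nsmul_eq_mul]
        _ = M * ((n - k : ℕ) : ℝ) := mul_comm _ _
    calc |∑ j ∈ Finset.range n, c j|
        ≤ |∑ j ∈ Finset.range k, c j| + |∑ j ∈ Finset.Ico k n, c j| := by
          rw [Finset.range_eq_Ico, ← Finset.sum_Ico_consecutive _ (Nat.zero_le k) hkn,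
            ← Finset.range_eq_Ico]
          exact abs_add_le _ _
      _ ≤ β i * k + M * ((n - k : ℕ) : ℝ) := add_le_add (A k hkP) hIco
      _ ≤ β i * n + M * t i := by
          have h1 : β i * k ≤ β i * n :=
            mul_le_mul_of_nonneg_left (Nat.cast_le.2 hkn) (hβpos i).le
          have h2 : ((n - k : ℕ) : ℝ) ≤ (t i : ℝ) := Nat.cast_le.2 hnk
          have h3 := mul_le_mul_of_nonneg_left h2 hM.le
          linarith
  rw [Metric.tendsto_atTop]
  intro ε hε
  rw [Metric.tendsto_atTop] at hβ
  obtain ⟨i, hi⟩ := hβ (ε/2) (by linarith)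
  have hβi : β i < ε/2 := by
    have := hi i le_rfl
    rw [Real.dist_eq, sub_zero, abs_of_pos (hβpos i)] at this
    exact this
  obtain ⟨N, hN⟩ := exists_nat_gt (2 * (M * t i) / ε)
  refine ⟨N + 1, fun n hn => ?_⟩
  have h1n : 1 ≤ n := le_trans (Nat.le_add_left 1 N) hn
  have hnpos : (0:ℝ) < n := by exact_mod_cast h1n
  rw [Real.dist_eq, sub_zero, abs_div, abs_of_pos hnpos, div_lt_iff₀ hnpos]
  have hk := key i n
  have hNn : (N : ℝ) ≤ n := Nat.cast_le.2 (Nat.le_of_succ_le hn)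
  have hn' : 2 * (M * t i) / ε < (n : ℝ) := hN.trans_le hNn
  rw [div_lt_iff₀ hε] at hn'
  nlinarith [hk, hβi, hnpos, mul_le_mul_of_nonneg_right hβi.le hnpos.le]
end

section
/- Let (c_j)_{j=0}^{π-1} be reals with |c_j| ≤ C, and suppose: (i) (1/π) sum_{j=0}^{π-1} c_j < -b, for some b > 0; (ii) for all 1 ≤ j ≤ ℓ the partial averages (1/j) sum_{m=0}^{j-1} c_m < -b; (iii) there exist block boundaries ℓ = S_0 < S_1 < ... < S_n with S_n = ℓ + T(n) ≤ π - 1 such that on each block [S_{i-1}, S_i) of length ≤ t_k the average of c is ≥ -b, and the tail [S_n, π) has length ≤ N_d, with (t_k + N_d)·C < (π/4)·a for some 0 < a < b satisfying the overall average < -b - a/4. Then for every 1 ≤ j ≤ π one has (1/j) sum_{m=0}^{j-1} c_m < -b. -/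
/-- Lower bound for a sum of bounded terms over an interval. -/
lemma sum_Ico_lower (c : ℕ → ℝ) (C : ℝ) (hbd : ∀ j, |c j| ≤ C) (A B : ℕ)
    (hAB : A ≤ B) : -C * ((B : ℝ) - A) ≤ ∑ j ∈ Finset.Ico A B, c j := by
  have h : ∀ j ∈ Finset.Ico A B, -C ≤ c j := fun j _ => (abs_le.1 (hbd j)).1
  calc -C * ((B : ℝ) - A) = (Finset.Ico A B).card • (-C) := by
        rw [Nat.card_Ico, nsmul_eq_mul, Nat.cast_sub hAB]; ring
    _ ≤ ∑ j ∈ Finset.Ico A B, c j := by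
        rw [← Finset.sum_const]; exact Finset.sum_le_sum h

/-- Abstract version of the contradiction argument (Equation 3.2): control of
the averages by blocks from behind, plus a strict bound on the total average,
forces all partial averages below `-b`. -/
theorem block_control_partial_averages (π ℓ n t Nd : ℕ) (C a b : ℝ)
    (c : ℕ → ℝ) (S : ℕ → ℕ)
    (hC : 0 < C) (hb : 0 < b) (ha : 0 < a) (hab : a < b) (hπ : 0 < π)
    (hbd : ∀ j, |c j| ≤ C)
    (hS0 : S 0 = ℓ) (hSmono : StrictMonoOn S (Set.Iic n)) (hSn : S n ≤ π - 1)
    (hblocklen : ∀ i, 1 ≤ i → i ≤ n → S i - S (i - 1) ≤ t)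
    (hblockavg : ∀ i, 1 ≤ i → i ≤ n →
      (-b) * ((S i : ℝ) - S (i - 1)) ≤ ∑ j ∈ Finset.Ico (S (i - 1)) (S i), c j)
    (htail : π - S n ≤ Nd)
    (hsmall : ((t : ℝ) + Nd) * C < ((π : ℝ) / 4) * a)
    (htotal : (∑ j ∈ Finset.range π, c j) / (π : ℝ) < -b - a / 4)
    (hpartial : ∀ j, 1 ≤ j → j ≤ ℓ → (∑ m ∈ Finset.range j, c m) / (j : ℝ) < -b) :
    ∀ j, 1 ≤ j → j ≤ π → (∑ m ∈ Finset.range j, c m) / (j : ℝ) < -b := by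
  have hmono : ∀ p q, p ≤ q → q ≤ n → S p ≤ S q := fun p q hpq hq =>
    hSmono.monotoneOn (Set.mem_Iic.2 (hpq.trans hq)) (Set.mem_Iic.2 hq) hpq
  have hπR : (0 : ℝ) < π := by exact_mod_cast hπ
  have hSnπ : S n ≤ π := le_trans hSn (Nat.sub_le _ _)
  have hSnπR : (S n : ℝ) ≤ π := by exact_mod_cast hSnπ
  have htailR : (π : ℝ) - S n ≤ Nd := by
    have := (Nat.cast_le (α := ℝ)).2 htail
    rwa [Nat.cast_sub hSnπ] at this
  have htotal' : ∑ j ∈ Finset.range π, c j < (-b - a / 4) * π :=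
    (div_lt_iff₀ hπR).1 htotal
  intro j hj1 hjπ
  by_contra hcon
  push_neg at hcon
  have hjl : ℓ < j := by
    by_contra h
    push_neg at h
    exact absurd (hpartial j hj1 h) (not_lt.2 hcon)
  have hjR : (0 : ℝ) < j := by exact_mod_cast hj1
  have hjπR : (j : ℝ) ≤ π := by exact_mod_cast hjπ
  have hsum_j : -b * j ≤ ∑ m ∈ Finset.range j, c m := (le_div_iff₀ hjR).1 hcon
  by_cases hjSn : j ≤ S n
  · -- j lies in some block
    have hP : ∃ i, j ≤ S i := ⟨n, hjSn⟩
    classical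
    set i := Nat.find hP with hi
    have hji : j ≤ S i := Nat.find_spec hP
    have hin : i ≤ n := Nat.find_le hjSn
    have hi1 : 1 ≤ i := by
      rcases Nat.eq_zero_or_pos i with h0 | h; · exfalso; have := hji; rw [h0, hS0] at this; omega
      exact h
    have hprev : S (i - 1) < j := by
      have : ¬ j ≤ S (i - 1) := Nat.find_min hP (by omega)
      omega
    have hSi_le : S i ≤ S n := hmono i n hin le_rfl
    have hSij : (S i : ℝ) - j ≤ t := by
      have hlen := hblocklen i hi1 hin
      have h1 : S (i-1) ≤ S i := by omega
      have : S i - S (i-1) ≤ t := hlen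
      have : (S i : ℝ) - S (i-1) ≤ t := by
        have := (Nat.cast_le (α := ℝ)).2 hlen
        rwa [Nat.cast_sub h1] at this
      have hprevR : (S (i-1) : ℝ) < j := by exact_mod_cast hprev
      linarith
    -- block sum bound
    have hblocksum : ∀ m, i ≤ m → m ≤ n →
        -b * ((S m : ℝ) - S i) ≤ ∑ k ∈ Finset.Ico (S i) (S m), c k := by
      intro m
      induction m with
      | zero =>
          intro h1 h2
          have hi0 : i = 0 := by omega
          simp [hi0]
      | succ m ih =>
          intro h1 h2
          rcases Nat.lt_or_ge i (m+1) with hlt | hge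
          · have him : i ≤ m := by omega
            have hSm : S i ≤ S m := hmono i m him (by omega)
            have hSm1 : S m ≤ S (m+1) := hmono m (m+1) (by omega) h2
            have hsplit := Finset.sum_Ico_consecutive c hSm hSm1
            have hblk := hblockavg (m+1) (by omega) h2
            simp only [Nat.add_sub_cancel] at hblk
            have := ih him (by omega)
            rw [← hsplit]
            push_cast
            linarith
          · have : i = m + 1 := by omega
            simp [this]
    have hS3 := hblocksum n hin le_rfl
    have hS2 := sum_Ico_lower c C hbd j (S i) hji
    have hS4 := sum_Ico_lower c C hbd (S n) π hSnπ
    have hsplit1 := Finset.sum_Ico_consecutive c (Nat.zero_le j) hji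
    have hsplit2 := Finset.sum_Ico_consecutive c (Nat.zero_le (S i)) hSi_le
    have hsplit3 := Finset.sum_Ico_consecutive c (Nat.zero_le (S n)) hSnπ
    rw [Finset.range_eq_Ico] at htotal' hsum_j
    have hjiR : (j : ℝ) ≤ S i := by exact_mod_cast hji
    have hSiSnR : (S i : ℝ) ≤ S n := by exact_mod_cast hSi_le
    nlinarith [mul_le_mul_of_nonneg_left hSij hC.le,
      mul_le_mul_of_nonneg_left htailR hC.le,
      mul_le_mul_of_nonneg_left (le_trans hjiR hSiSnR) hb.le]
  · -- j in the tail
    push_neg at hjSn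
    have htailj : (π : ℝ) - j ≤ Nd := by
      have hjR' : (S n : ℝ) < j := by exact_mod_cast hjSn
      linarith
    have hS4 := sum_Ico_lower c C hbd j π hjπ
    have hsplit := Finset.sum_Ico_consecutive c (Nat.zero_le j) hjπ
    rw [Finset.range_eq_Ico] at htotal' hsum_j
    nlinarith [mul_le_mul_of_nonneg_left htailj hC.le,
      mul_le_mul_of_nonneg_left hjπR hb.le]
end

section
/- Let f be a homeomorphism of a compact metric space X and let K' ⊂ K be compact f-invariant sets. Suppose every point x ∈ K \ (K' ∪ O) either satisfies ω(x) ⊂ K' or α(x) ⊂ K', where O is a single periodic orbit contained in K and disjoint from K'. Then every ergodic f-invariant probability measure μ supported on K is either supported on K' or equals the periodic measure on O. -/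
open MeasureTheory

/-- If every point of `K \ (K' ∪ O)` has ω-limit set in `K'` or α-limit set in
`K'`, where `O` is a periodic orbit in `K` disjoint from `K'`, then every
ergodic measure on `K` is supported on `K'` or on `O`. -/
theorem ergodic_measure_dichotomy {X : Type*} [MetricSpace X] [CompactSpace X]
    [MeasurableSpace X] [BorelSpace X]
    (f : X ≃ₜ X) (K K' : Set X) (hK : IsCompact K) (hK' : IsCompact K')
    (hKinv : ⇑f '' K = K) (hK'inv : ⇑f '' K' = K') (hsub : K' ⊆ K)
    (q : X) (p : ℕ) (hp : 0 < p) (hq : (⇑f)^[p] q = q)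
    (O : Set X) (hO : O = Set.range (fun k : ℕ => (⇑f)^[k] q))
    (hOK : O ⊆ K) (hOK' : Disjoint O K')
    (hdich : ∀ x ∈ K \ (K' ∪ O),
      (⋂ N : ℕ, closure ((fun k => (⇑f)^[k] x) '' Set.Ici N)) ⊆ K' ∨
      (⋂ N : ℕ, closure ((fun k => (⇑f.symm)^[k] x) '' Set.Ici N)) ⊆ K')
    (μ : Measure X) [IsProbabilityMeasure μ]
    (hErg : Ergodic (⇑f) μ) (hμK : μ K = 1) :
    μ K' = 1 ∨ μ O = 1 := by
  have hmp : MeasurePreserving (⇑f) μ μ := hErg.toMeasurePreserving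
  -- the inverse is also measure preserving
  have hmps : MeasurePreserving (⇑f.symm) μ μ := by
    have := (MeasurePreserving.symm f.toMeasurableEquiv hmp)
    simpa using this
  -- O is finite, hence closed and measurable
  have hOfin : O.Finite := by
    have : O ⊆ (fun k : ℕ => (⇑f)^[k] q) '' Set.Iio p := by
      rw [hO]
      rintro x ⟨k, rfl⟩
      refine ⟨k % p, Set.mem_Iio.2 (Nat.mod_lt _ hp), ?_⟩
      exact Function.IsPeriodicPt.iterate_mod_apply hq k
    exact ((Set.finite_Iio p).image _).subset this
  have hOmeas : MeasurableSet O := hOfin.isClosed.measurableSet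
  -- O is invariant
  have hOim : ⇑f '' O = O := by
    rw [hO]
    apply Set.Subset.antisymm
    · rintro x ⟨y, ⟨k, rfl⟩, rfl⟩
      exact ⟨k + 1, by simp [Function.iterate_succ_apply']⟩
    · rintro x ⟨k, rfl⟩
      refine ⟨(⇑f)^[k + p - 1] q, ⟨k + p - 1, rfl⟩, ?_⟩
      have h1 : (⇑f)^[k + p - 1 + 1] q = (⇑f)^[k] q := by
        rw [show k + p - 1 + 1 = k + p by omega, Function.iterate_add_apply, hq]
      show f ((⇑f)^[k + p - 1] q) = (⇑f)^[k] q
      rw [← h1]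
      exact (Function.iterate_succ_apply' _ _ _).symm
  have hOinv : ⇑f ⁻¹' O = O := by
    conv_lhs => rw [← hOim]
    exact Set.preimage_image_eq _ f.injective
  -- Poincaré recurrence for f and f.symm
  have hFwd := hmp.conservative.ae_frequently_mem_of_mem_nhds
  have hBwd := hmps.conservative.ae_frequently_mem_of_mem_nhds
  -- a.e. point is not in K \ (K' ∪ O)
  have hgood : ∀ᵐ x ∂μ, x ∉ K \ (K' ∪ O) := by
    filter_upwards [hFwd, hBwd] with x hxf hxb hx
    have hxK' : x ∉ K' := fun h => hx.2 (Or.inl h)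
    have key : ∀ (g : X → X), (∀ s ∈ nhds x, ∃ᶠ n in Filter.atTop, g^[n] x ∈ s) →
        x ∈ ⋂ N : ℕ, closure ((fun k => g^[k] x) '' Set.Ici N) := by
      intro g hg
      refine Set.mem_iInter.2 fun N => ?_
      rw [mem_closure_iff_nhds]
      intro t ht
      rcases (Filter.frequently_atTop.1 (hg t ht)) N with ⟨n, hnN, hnt⟩
      exact ⟨g^[n] x, hnt, ⟨n, Set.mem_Ici.2 hnN, rfl⟩⟩
    rcases hdich x hx with h | h
    · exact hxK' (h (key _ hxf))
    · exact hxK' (h (key _ hxb))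
  have hnull : μ (K \ (K' ∪ O)) = 0 := by
    refine measure_mono_null (fun x hx => ?_) (ae_iff.1 hgood)
    simp only [Set.mem_setOf_eq, not_not]
    exact hx
  have hunion : μ (K' ∪ O) = 1 := by
    have h1 : μ K ≤ μ (K' ∪ O) + μ (K \ (K' ∪ O)) := by
      refine (measure_mono (fun x hx => ?_)).trans (measure_union_le _ _)
      by_cases h : x ∈ K' ∪ O
      · exact Or.inl h
      · exact Or.inr ⟨hx, h⟩
    rw [hnull, add_zero, hμK] at h1
    exact le_antisymm prob_le_one h1
  rcases hErg.measure_self_or_compl_eq_zero hOmeas hOinv with h0 | h1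
  · left
    have : μ (K' ∪ O) ≤ μ K' + μ O := measure_union_le _ _
    rw [hunion, h0, add_zero] at this
    exact le_antisymm prob_le_one this
  · right
    rwa [prob_compl_eq_zero_iff hOmeas] at h1
end
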